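/- Let P and Q be probability distributions on finite sets Ω × Θ (product space), with marginals P', Q' on Ω and conditionals P'_x, Q'_x on Θ for each x ∈ Ω, all probabilities positive. Then for every α > 1, D_α(P‖Q) ≤ D_α(P'‖Q') + max_{x∈Ω} D_α(P'_x‖Q'_x). -/

import Mathlib

theorem renyi_composition {Ω Θ : Type*} [Fintype Ω] [Fintype Θ] [Nonempty Ω]
    (P Q : Ω → Θ → ℝ)
    (hP : ∀ x y, 0 < P x y) (hQ : ∀ x y, 0 < Q x y)
    (hPsum : ∑ x, ∑ y, P x y = 1) (hQsum : ∑ x, ∑ y, Q x y = 1)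
    (α : ℝ) (hα : 1 < α) :
    (1 / (α - 1)) * Real.log (∑ x, ∑ y, P x y ^ α * Q x y ^ (1 - α)) ≤
      (1 / (α - 1)) * Real.log (∑ x, (∑ y, P x y) ^ α * (∑ y, Q x y) ^ (1 - α)) +
      Finset.univ.sup' Finset.univ_nonempty (fun x =>
        (1 / (α - 1)) * Real.log (∑ y,
          (P x y / ∑ y', P x y') ^ α * (Q x y / ∑ y', Q x y') ^ (1 - α))) := by
  rcases isEmpty_or_nonempty Θ with hΘ | hΘ
  · simp at hPsum
  have hα' : 0 < α - 1 := by linarith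
  have hcpos : (0:ℝ) < 1 / (α - 1) := by positivity
  set S : Ω → ℝ := fun x => ∑ y,
      (P x y / ∑ y', P x y') ^ α * (Q x y / ∑ y', Q x y') ^ (1 - α) with hSdef
  set A : Ω → ℝ := fun x => (∑ y, P x y) ^ α * (∑ y, Q x y) ^ (1 - α) with hAdef
  have hPx : ∀ x, 0 < ∑ y, P x y := fun x =>
    Finset.sum_pos (fun y _ => hP x y) Finset.univ_nonempty
  have hQx : ∀ x, 0 < ∑ y, Q x y := fun x =>
    Finset.sum_pos (fun y _ => hQ x y) Finset.univ_nonempty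
  have hSpos : ∀ x, 0 < S x := by
    intro x
    apply Finset.sum_pos _ Finset.univ_nonempty
    intro y _
    have h1 := hP x y; have h2 := hQ x y; have h3 := hPx x; have h4 := hQx x
    positivity
  have hApos : ∀ x, 0 < A x := by
    intro x
    have h3 := hPx x; have h4 := hQx x
    simp only [hAdef]
    positivity
  have key : ∀ x, A x * S x = ∑ y, P x y ^ α * Q x y ^ (1 - α) := by
    intro x
    simp only [hAdef, hSdef, Finset.mul_sum]
    apply Finset.sum_congr rfl
    intro y _
    rw [Real.div_rpow (hP x y).le (hPx x).le, Real.div_rpow (hQ x y).le (hQx x).le]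
    have h1 : (0:ℝ) < (∑ y, P x y) ^ α := Real.rpow_pos_of_pos (hPx x) α
    have h2 : (0:ℝ) < (∑ y, Q x y) ^ (1 - α) := Real.rpow_pos_of_pos (hQx x) (1 - α)
    field_simp
  obtain ⟨x0, -, hx0⟩ := Finset.exists_mem_eq_sup' (Finset.univ_nonempty (α := Ω)) S
  have hSle : ∀ x, S x ≤ S x0 := fun x => hx0 ▸ Finset.le_sup' S (Finset.mem_univ x)
  have hsum_eq : ∑ x, ∑ y, P x y ^ α * Q x y ^ (1 - α) = ∑ x, A x * S x := by
    exact (Finset.sum_congr rfl fun x _ => (key x).symm)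
  have hsum_le : ∑ x, A x * S x ≤ (∑ x, A x) * S x0 := by
    rw [Finset.sum_mul]
    apply Finset.sum_le_sum
    intro x _
    exact mul_le_mul_of_nonneg_left (hSle x) (hApos x).le
  have hApossum : 0 < ∑ x, A x := Finset.sum_pos (fun x _ => hApos x) Finset.univ_nonempty
  have hASpos : 0 < ∑ x, A x * S x :=
    Finset.sum_pos (fun x _ => mul_pos (hApos x) (hSpos x)) Finset.univ_nonempty
  have hlog : Real.log (∑ x, ∑ y, P x y ^ α * Q x y ^ (1 - α)) ≤
      Real.log (∑ x, A x) + Real.log (S x0) := by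
    rw [hsum_eq, ← Real.log_mul hApossum.ne' (hSpos x0).ne']
    exact Real.log_le_log hASpos hsum_le
  have hfin : (1 / (α - 1)) * Real.log (S x0) ≤
      Finset.univ.sup' Finset.univ_nonempty
        (fun x => (1 / (α - 1)) * Real.log (S x)) :=
    Finset.le_sup' (fun x => (1 / (α - 1)) * Real.log (S x)) (Finset.mem_univ x0)
  calc (1 / (α - 1)) * Real.log (∑ x, ∑ y, P x y ^ α * Q x y ^ (1 - α))
      ≤ (1 / (α - 1)) * (Real.log (∑ x, A x) + Real.log (S x0)) :=
        mul_le_mul_of_nonneg_left hlog hcpos.le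
    _ = (1 / (α - 1)) * Real.log (∑ x, A x) + (1 / (α - 1)) * Real.log (S x0) := by ring
    _ ≤ _ := by
        apply add_le_add_right hfin
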